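/- For every x > 0, x·tanh(x) = Σ_{n≥0} 2x² / (x² + (π²/4)(2n+1)²). -/

import Mathlib

open Real MeasureTheory intervalIntegral

namespace Stmt5Aux

theorem key_integral (y : ℝ) (hy : 0 < y) (n : ℤ) :
    (∫ t in (-π)..π, Complex.exp (-n * t * Complex.I) * Complex.cosh (y * t))
      = (-1 : ℂ) ^ n * (2 * Complex.sinh (π * y) * y / (y ^ 2 + n ^ 2)) := by
  have h1 : (y : ℂ) - n * Complex.I ≠ 0 := by
    intro h
    have := congrArg Complex.re h
    simp [Complex.ext_iff] at this
    exact hy.ne' this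
  have h2 : -(y : ℂ) - n * Complex.I ≠ 0 := by
    intro h
    have := congrArg Complex.re h
    simp [Complex.ext_iff] at this
    linarith
  have key : ∀ t : ℝ, Complex.exp (-n * t * Complex.I) * Complex.cosh (y * t)
      = (Complex.exp (((y : ℂ) - n * Complex.I) * t)
        + Complex.exp ((-(y : ℂ) - n * Complex.I) * t)) / 2 := by
    intro t
    rw [Complex.cosh, ← mul_div_assoc, mul_add, ← Complex.exp_add, ← Complex.exp_add]
    ring_nf
  rw [intervalIntegral.integral_congr (fun t _ => key t)]
  rw [intervalIntegral.integral_div]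
  have i1 : IntervalIntegrable (fun t : ℝ => Complex.exp (((y:ℂ) - n*Complex.I) * t))
      volume (-π) π := (Continuous.intervalIntegrable (by fun_prop) _ _)
  have i2 : IntervalIntegrable (fun t : ℝ => Complex.exp ((-(y:ℂ) - n*Complex.I) * t))
      volume (-π) π := (Continuous.intervalIntegrable (by fun_prop) _ _)
  rw [intervalIntegral.integral_add i1 i2]
  rw [integral_exp_mul_complex h1, integral_exp_mul_complex h2]
  have hexp : ∀ m : ℤ, Complex.exp (m * π * Complex.I) = (-1 : ℂ) ^ m := by
    intro m
    rw [show (m : ℂ) * π * Complex.I = m * (π * Complex.I) by ring,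
      Complex.exp_int_mul, Complex.exp_pi_mul_I]
  simp only [Complex.ofReal_neg]
  have e1 : Complex.exp (((y : ℂ) - n * Complex.I) * π)
      = Complex.exp (π * y) * (-1 : ℂ) ^ (-n) := by
    rw [show ((y : ℂ) - n * Complex.I) * π = (π * y : ℝ) + ((-n : ℤ) : ℂ) * π * Complex.I by
      push_cast; ring, Complex.exp_add, hexp]
    push_cast; ring
  have e2 : Complex.exp (((y : ℂ) - n * Complex.I) * (-π))
      = Complex.exp (-(π * y)) * (-1 : ℂ) ^ n := by
    rw [show ((y : ℂ) - n * Complex.I) * (-π) = (-(π * y) : ℝ) + ((n : ℤ) : ℂ) * π * Complex.I by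
      push_cast; ring, Complex.exp_add, hexp]
    push_cast; ring_nf
  have e3 : Complex.exp ((-(y : ℂ) - n * Complex.I) * π)
      = Complex.exp (-(π * y)) * (-1 : ℂ) ^ (-n) := by
    rw [show (-(y : ℂ) - n * Complex.I) * π = (-(π * y) : ℝ) + ((-n : ℤ) : ℂ) * π * Complex.I by
      push_cast; ring, Complex.exp_add, hexp]
    push_cast; ring_nf
  have e4 : Complex.exp ((-(y : ℂ) - n * Complex.I) * (-π))
      = Complex.exp (π * y) * (-1 : ℂ) ^ n := by
    rw [show (-(y : ℂ) - n * Complex.I) * (-π) = ((π * y) : ℝ) + ((n : ℤ) : ℂ) * π * Complex.I by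
      push_cast; ring, Complex.exp_add, hexp]
    push_cast; ring_nf
  rw [e1, e2, e3, e4]
  have hneg : ((-1 : ℂ) ^ (-n)) = (-1 : ℂ) ^ n := by
    rw [zpow_neg]
    rcases Int.even_or_odd n with h | h
    · rw [h.neg_one_zpow]; norm_num
    · rw [h.neg_one_zpow]; norm_num
  rw [hneg, Complex.sinh]
  have hy2 : ((y : ℂ) ^ 2 + (n : ℂ) ^ 2) ≠ 0 := by
    have hcast : ((y:ℂ)^2+(n:ℂ)^2) = ((y^2 + (n:ℝ)^2 : ℝ) : ℂ) := by push_cast; ring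
    rw [hcast]
    exact_mod_cast (by positivity : (0:ℝ) < y^2 + (n:ℝ)^2).ne'
  have hfac : ((y:ℂ) - n * Complex.I) * ((y:ℂ) + n * Complex.I) = (y:ℂ)^2 + n^2 := by
    have := Complex.I_sq
    ring_nf
    rw [Complex.I_sq]
    ring
  field_simp
  ring_nf
  rw [Complex.I_sq]
  ring

theorem coeff_eq (y : ℝ) (hy : 0 < y) (n : ℤ) :
    haveI : Fact (0 < 2*π) := ⟨by positivity⟩
    fourierCoeff (AddCircle.liftIco (2*π) (-π) (fun t : ℝ => Complex.cosh (y*t))) n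
      = (-1:ℂ)^n * (Complex.sinh (π*y) * y / (π * (y^2+n^2))) := by
  haveI : Fact (0 < 2*π) := ⟨by positivity⟩
  rw [fourierCoeff_liftIco_eq]
  rw [fourierCoeffOn_eq_integral]
  have hb : -π + 2*π = π := by ring
  rw [hb]
  have hint : ∀ t : ℝ, t ∈ Set.uIcc (-π) π →
      (fourier (-n) (t : AddCircle (π - -π)) : ℂ) • Complex.cosh (y*t)
        = Complex.exp (-n * t * Complex.I) * Complex.cosh (y * t) := by
    intro t _
    rw [smul_eq_mul, fourier_coe_apply]
    congr 2
    have hpi : (π : ℂ) ≠ 0 := Complex.ofReal_ne_zero.mpr pi_ne_zero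
    have h2 : ((π:ℝ) - -π : ℝ) = 2*π := by ring
    rw [h2]
    rw [div_eq_iff (by push_cast; simp [hpi] : ((2*π : ℝ) : ℂ) ≠ 0)]
    push_cast
    ring
  rw [intervalIntegral.integral_congr hint, key_integral y hy n]
  have hpi : (π : ℂ) ≠ 0 := Complex.ofReal_ne_zero.mpr pi_ne_zero
  have hy2 : ((y : ℂ)^2+(n:ℂ)^2) ≠ 0 := by
    have hcast : ((y:ℂ)^2+(n:ℂ)^2) = ((y^2 + (n:ℝ)^2 : ℝ) : ℂ) := by push_cast; ring
    rw [hcast]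
    exact_mod_cast (by positivity : (0:ℝ) < y^2 + (n:ℝ)^2).ne'
  rw [Complex.real_smul]
  push_cast
  rw [show ((π:ℂ) - -↑π) = 2*π by ring]
  field_simp [hpi, hy2]

theorem two_sums (y : ℝ) (hy : 0 < y) :
    HasSum (fun n : ℤ => Real.sinh (π*y) * y / (π * (y^2+(n:ℝ)^2))) (Real.cosh (π*y))
    ∧ HasSum (fun n : ℤ => (-1:ℝ)^n * (Real.sinh (π*y) * y / (π * (y^2+(n:ℝ)^2)))) 1 := by
  haveI : Fact (0 < 2*π) := ⟨by positivity⟩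
  set g : ℝ → ℂ := fun t : ℝ => Complex.cosh (y*t) with hg
  have hcont : Continuous (AddCircle.liftIco (2*π) (-π) g) := by
    apply AddCircle.liftIco_continuous
    · show Complex.cosh _ = Complex.cosh _
      rw [show -π + 2*π = π by ring]
      push_cast
      rw [show (y:ℂ) * -(π:ℂ) = -((y:ℂ) * π) by ring, Complex.cosh_neg]
    · fun_prop
  set F : C(AddCircle (2*π), ℂ) := ⟨_, hcont⟩ with hF
  have hcoeff : ∀ n : ℤ, fourierCoeff (⇑F) n
      = (-1:ℂ)^n * (Complex.sinh (π*y) * y / (π * (y^2+n^2))) := fun n => coeff_eq y hy n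
  -- summability
  have s2 : Summable (fun n : ℕ => 1/(y^2+(n:ℝ)^2)) := by
    rw [← summable_nat_add_iff 1]
    apply Summable.of_nonneg_of_le (fun n => by positivity) (fun n => ?_)
      ((summable_nat_add_iff 1).mpr (summable_one_div_nat_pow.mpr one_lt_two))
    apply one_div_le_one_div_of_le (by positivity)
    push_cast
    nlinarith [sq_nonneg y]
  have s3 : Summable (fun n : ℤ => 1/(y^2+(n:ℝ)^2)) := by
    apply Summable.of_nat_of_neg
    · exact s2.congr (fun n => by norm_num)
    · exact s2.congr (fun n => by push_cast; norm_num)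
  have s4 : Summable (fun n : ℤ => Real.sinh (π*y) * y / (π * (y^2+(n:ℝ)^2))) := by
    have := (s3.mul_left (Real.sinh (π*y) * y / π))
    apply this.congr
    intro n
    field_simp
  have hsum : Summable (fourierCoeff (⇑F)) := by
    apply Summable.of_norm
    apply s4.congr
    intro n
    rw [hcoeff n]
    rw [norm_mul, norm_zpow, norm_neg, norm_one, one_zpow, one_mul]
    have : (Complex.sinh (π*y) * y / (π * ((y:ℂ)^2+(n:ℂ)^2)))
        = ((Real.sinh (π*y) * y / (π * (y^2+(n:ℝ)^2)) : ℝ) : ℂ) := by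
      push_cast
      norm_num
    rw [this, Complex.norm_real, Real.norm_eq_abs, abs_of_nonneg (by positivity)]
  -- pointwise sums
  have hπmem : -π ∈ Set.Ico (-π) (-π + 2*π) := by constructor <;> [rfl; linarith [pi_pos]]
  have h0mem : (0:ℝ) ∈ Set.Ico (-π) (-π + 2*π) := by
    constructor <;> simp [pi_pos, pi_pos.le, le_of_lt]
  have hFπ : F ((π : ℝ) : AddCircle (2*π)) = (Real.cosh (π*y) : ℂ) := by
    have hper : ((π : ℝ) : AddCircle (2*π)) = ((-π : ℝ) : AddCircle (2*π)) := by
      have h := AddCircle.coe_add_period (2*π) (-π)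
      rw [show -π + 2*π = π by ring] at h
      exact h
    rw [hper]
    show AddCircle.liftIco (2*π) (-π) g _ = _
    rw [AddCircle.liftIco_coe_apply hπmem, hg]
    show Complex.cosh _ = _
    rw [show (y:ℂ) * ((-π:ℝ):ℂ) = -(((π*y :ℝ)):ℂ) by push_cast; ring, Complex.cosh_neg,
      Complex.ofReal_cosh]
  have hF0 : F ((0 : ℝ) : AddCircle (2*π)) = 1 := by
    show AddCircle.liftIco (2*π) (-π) g _ = _
    rw [AddCircle.liftIco_coe_apply h0mem, hg]
    norm_num
  have hfourierπ : ∀ n : ℤ, fourier n (((π:ℝ)) : AddCircle (2*π)) = (-1:ℂ)^n := by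
    intro n
    rw [fourier_coe_apply]
    rw [show 2*(π:ℂ)*Complex.I*n*π/(2*π : ℝ) = n * (π * Complex.I) by
      push_cast
      rw [mul_div_assoc]
      rw [show ((π:ℂ)/(2*π)) = 1/2 by
        rw [div_eq_div_iff (by simp [Complex.ofReal_ne_zero.mpr pi_ne_zero]) (by norm_num)]
        ring]
      ring]
    rw [Complex.exp_int_mul, Complex.exp_pi_mul_I]
  have HP := has_pointwise_sum_fourier_series_of_summable hsum (((π:ℝ)) : AddCircle (2*π))
  have H0 := has_pointwise_sum_fourier_series_of_summable hsum (((0:ℝ)) : AddCircle (2*π))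
  rw [hFπ] at HP
  rw [hF0] at H0
  constructor
  · have hterm : (fun i : ℤ => fourierCoeff (⇑F) i • fourier i (((π:ℝ)) : AddCircle (2*π)))
        = fun n : ℤ => ((Real.sinh (π*y) * y / (π * (y^2+(n:ℝ)^2)) : ℝ) : ℂ) := by
      funext n
      rw [hcoeff n, smul_eq_mul, hfourierπ n]
      have h1 : ((-1:ℂ)^n) * ((-1:ℂ)^n) = 1 := by
        rw [← zpow_add₀ (by norm_num : (-1:ℂ) ≠ 0)]
        rcases Int.even_or_odd n with h | h
        · exact (Even.add h h).neg_one_zpow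
        · exact (Odd.add_odd h h).neg_one_zpow
      rw [mul_comm ((-1:ℂ)^n * _), ← mul_assoc, h1, one_mul]
      push_cast
      ring
    rw [hterm] at HP
    exact Complex.hasSum_ofReal.mp HP
  · have hterm : (fun i : ℤ => fourierCoeff (⇑F) i • fourier i (((0:ℝ)) : AddCircle (2*π)))
        = fun n : ℤ => (((-1:ℝ)^n * (Real.sinh (π*y) * y / (π * (y^2+(n:ℝ)^2))) : ℝ) : ℂ) := by
      funext n
      have h0 : ((0:ℝ) : AddCircle (2*π)) = 0 := rfl
      rw [hcoeff n, smul_eq_mul, h0, fourier_eval_zero, mul_one]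
      push_cast
      ring
    rw [hterm] at H0
    have := Complex.hasSum_ofReal.mp H0
    simpa using this

theorem odd_sum (y : ℝ) (hy : 0 < y) :
    HasSum (fun k : ℕ => 4 * Real.sinh (π*y) * y / (π * (y^2+(2*(k:ℝ)+1)^2)))
      (Real.cosh (π*y) - 1) := by
  obtain ⟨h1, h2⟩ := two_sums y hy
  have h3 := h1.sub h2
  have h4 := h3.nat_add_neg
  norm_num at h4
  have h5 : HasSum (fun n : ℕ => (1 - (-1:ℝ)^n) * 2 * (Real.sinh (π*y) * y / (π * (y^2+(n:ℝ)^2))))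
      (Real.cosh (π*y) - 1) := by
    apply h4.congr_fun
    intro n
    have hinv : ((-1:ℝ)^n)⁻¹ = (-1:ℝ)^n := by
      rw [← inv_pow, inv_neg, inv_one]
    rw [hinv]
    ring
  have hodd : ∀ m : ℕ, m ∉ Set.range (fun k : ℕ => 2*k+1) →
      (1 - (-1:ℝ)^m) * 2 * (Real.sinh (π*y) * y / (π * (y^2+(m:ℝ)^2))) = 0 := by
    intro m hm
    have : Even m := by
      rcases Nat.even_or_odd m with h | h
      · exact h
      · obtain ⟨c, hc⟩ := h
        exact absurd ⟨c, by simpa using hc.symm⟩ hm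
    rw [this.neg_one_pow]
    ring
  have hinj : Function.Injective (fun k : ℕ => 2*k+1) := fun a b h => by simp only [] at h; omega
  have h6 := (hinj.hasSum_iff hodd).mpr h5
  apply h6.congr_fun
  intro k
  simp only [Function.comp]
  have : Odd (2*k+1) := ⟨k, by omega⟩
  rw [this.neg_one_pow]
  push_cast
  ring_nf

end Stmt5Aux

theorem stmt_5 (x : ℝ) (hx : 0 < x) :
    x * Real.tanh x =
      ∑' n : ℕ, 2 * x ^ 2 / (x ^ 2 + (π ^ 2 / 4) * (2 * n + 1) ^ 2) := by
  have hy : 0 < 2*x/π := by positivity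
  have h := Stmt5Aux.odd_sum (2*x/π) hy
  rw [show π*(2*x/π) = 2*x by field_simp] at h
  have hsinh : Real.sinh (2*x) ≠ 0 := (Real.sinh_pos_iff.mpr (by linarith)).ne'
  have h2 := h.mul_left (x / Real.sinh (2*x))
  have hval : x / Real.sinh (2*x) * (Real.cosh (2*x) - 1) = x * Real.tanh x := by
    rw [Real.tanh_eq_sinh_div_cosh, Real.cosh_two_mul, Real.sinh_two_mul]
    have hc : Real.cosh x ≠ 0 := (Real.cosh_pos (x := x)).ne'
    have hs : Real.sinh x ≠ 0 := (Real.sinh_pos_iff.mpr hx).ne'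
    have hsq : Real.cosh x ^ 2 = Real.sinh x ^ 2 + 1 := by
      rw [Real.cosh_sq]
    have h2s : Real.sinh (2*x) = 2 * Real.sinh x * Real.cosh x := Real.sinh_two_mul x
    rw [h2s] at hsinh
    field_simp
    linear_combination hsq
  rw [hval] at h2
  rw [← h2.tsum_eq]
  apply tsum_congr
  intro k
  have hπ : (π : ℝ) ≠ 0 := pi_ne_zero
  have hd : ((2*x/π)^2+(2*(k:ℝ)+1)^2) ≠ 0 := by positivity
  have hd2 : (x ^ 2 + (π ^ 2 / 4) * (2 * (k:ℝ) + 1) ^ 2) ≠ 0 := by positivity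
  field_simp
  ring
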